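/- Let λ₁ ≤ 1 ≤ λ₂ be real numbers, a ∈ ℝ, b ≥ 0. Define ψ(n,m₁,m₂) = 2^{na}·(2^n + 2^{nλ₁} + 2^{nλ₂} + 2^{nλ₁}|m₁| + 2^{nλ₂}|m₂|)^{-b}. Then sup over ℤ³ of ψ is finite if and only if b·λ₁ ≤ a ≤ b·λ₂. -/

import Mathlib

noncomputable def shearPsi (l1 l2 a b : ℝ) (n m₁ m₂ : ℤ) : ℝ :=
  (2 : ℝ) ^ ((n : ℝ) * a) *
    ((2 : ℝ) ^ (n : ℝ) + (2 : ℝ) ^ ((n : ℝ) * l1) + (2 : ℝ) ^ ((n : ℝ) * l2)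
      + (2 : ℝ) ^ ((n : ℝ) * l1) * |(m₁ : ℝ)| + (2 : ℝ) ^ ((n : ℝ) * l2) * |(m₂ : ℝ)|) ^ (-b)

private lemma shear_aux_unbounded (ε C : ℝ) (hε : 0 < ε) :
    ∃ n : ℕ, C < (2 : ℝ) ^ ((n : ℝ) * ε) := by
  obtain ⟨n, hn⟩ := pow_unbounded_of_one_lt (y := (2:ℝ) ^ ε) C
    ((Real.one_lt_rpow_iff_of_pos (by norm_num)).mpr (Or.inl ⟨one_lt_two, hε⟩))
  refine ⟨n, ?_⟩
  rwa [← Real.rpow_natCast ((2:ℝ) ^ ε) n, ← Real.rpow_mul (by norm_num), mul_comm] at hn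

theorem shearPsi_bounded_iff_case3 (l1 l2 a b : ℝ) (h1 : l1 ≤ 1) (h2 : 1 ≤ l2)
    (hb : 0 ≤ b) :
    (∃ M : ℝ, ∀ n m₁ m₂ : ℤ, shearPsi l1 l2 a b n m₁ m₂ ≤ M) ↔ (b * l1 ≤ a ∧ a ≤ b * l2) := by
  have h3b : (0:ℝ) < (3:ℝ) ^ (-b) := Real.rpow_pos_of_pos (by norm_num) _
  have h3b' : (3:ℝ) ^ (-b) * (3:ℝ) ^ b = 1 := by
    rw [← Real.rpow_add (by norm_num), neg_add_cancel, Real.rpow_zero]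
  constructor
  · rintro ⟨M, hM⟩
    -- key lower bound at m₁ = m₂ = 0
    have key : ∀ n : ℤ, ∀ c : ℝ, (2:ℝ) ^ (n:ℝ) ≤ (2:ℝ) ^ ((n:ℝ) * c) →
        (2:ℝ) ^ ((n:ℝ) * l1) ≤ (2:ℝ) ^ ((n:ℝ) * c) →
        (2:ℝ) ^ ((n:ℝ) * l2) ≤ (2:ℝ) ^ ((n:ℝ) * c) →
        (3:ℝ) ^ (-b) * (2:ℝ) ^ ((n:ℝ) * a + (n:ℝ) * c * (-b)) ≤ M := by
      intro n c hc1 hc2 hc3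
      have hM0 := hM n 0 0
      have hcpos : (0:ℝ) < (2:ℝ) ^ ((n:ℝ) * c) := Real.rpow_pos_of_pos (by norm_num) _
      have hpos : (0:ℝ) < (2:ℝ) ^ ((n:ℝ)) + (2:ℝ) ^ ((n:ℝ) * l1) + (2:ℝ) ^ ((n:ℝ) * l2) := by
        positivity
      have hSle : (2:ℝ) ^ ((n:ℝ)) + (2:ℝ) ^ ((n:ℝ) * l1) + (2:ℝ) ^ ((n:ℝ) * l2)
          ≤ 3 * (2:ℝ) ^ ((n:ℝ) * c) := by linarith
      have hinv : (3 * (2:ℝ) ^ ((n:ℝ) * c)) ^ (-b)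
          ≤ ((2:ℝ) ^ ((n:ℝ)) + (2:ℝ) ^ ((n:ℝ) * l1) + (2:ℝ) ^ ((n:ℝ) * l2)) ^ (-b) :=
        Real.rpow_le_rpow_of_nonpos hpos hSle (neg_nonpos.mpr hb)
      have heq : (3 * (2:ℝ) ^ ((n:ℝ) * c)) ^ (-b)
          = (3:ℝ) ^ (-b) * (2:ℝ) ^ ((n:ℝ) * c * (-b)) := by
        rw [Real.mul_rpow (by norm_num) hcpos.le, ← Real.rpow_mul (by norm_num)]
      have hexp : (2:ℝ) ^ ((n:ℝ) * a + (n:ℝ) * c * (-b))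
          = (2:ℝ) ^ ((n:ℝ) * a) * (2:ℝ) ^ ((n:ℝ) * c * (-b)) :=
        Real.rpow_add (by norm_num) _ _
      have h2a : (0:ℝ) < (2:ℝ) ^ ((n:ℝ) * a) := Real.rpow_pos_of_pos (by norm_num) _
      calc (3:ℝ) ^ (-b) * (2:ℝ) ^ ((n:ℝ) * a + (n:ℝ) * c * (-b))
          = (2:ℝ) ^ ((n:ℝ) * a) * ((3:ℝ) ^ (-b) * (2:ℝ) ^ ((n:ℝ) * c * (-b))) := by
            rw [hexp]; ring
        _ = (2:ℝ) ^ ((n:ℝ) * a) * (3 * (2:ℝ) ^ ((n:ℝ) * c)) ^ (-b) := by rw [heq]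
        _ ≤ (2:ℝ) ^ ((n:ℝ) * a)
            * ((2:ℝ) ^ ((n:ℝ)) + (2:ℝ) ^ ((n:ℝ) * l1) + (2:ℝ) ^ ((n:ℝ) * l2)) ^ (-b) :=
            mul_le_mul_of_nonneg_left hinv h2a.le
        _ ≤ M := by
            have : shearPsi l1 l2 a b n 0 0 = (2:ℝ) ^ ((n:ℝ) * a)
                * ((2:ℝ) ^ ((n:ℝ)) + (2:ℝ) ^ ((n:ℝ) * l1) + (2:ℝ) ^ ((n:ℝ) * l2)) ^ (-b) := by
              simp [shearPsi]
            linarith [hM0, this ▸ hM0]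
    constructor
    · by_contra hcon
      push_neg at hcon
      obtain ⟨k, hk⟩ := shear_aux_unbounded (b * l1 - a) (M * (3:ℝ) ^ b) (by linarith)
      have hx : ((-(k:ℤ) : ℤ) : ℝ) = -(k:ℝ) := by push_cast; ring
      have hkey := key (-(k:ℤ)) l1 ?_ le_rfl ?_
      · rw [hx] at hkey
        have he : -(k:ℝ) * a + -(k:ℝ) * l1 * (-b) = (k:ℝ) * (b * l1 - a) := by ring
        rw [he] at hkey
        have : M * (3:ℝ) ^ b * (3:ℝ) ^ (-b) < (2:ℝ) ^ ((k:ℝ) * (b * l1 - a)) * (3:ℝ) ^ (-b) :=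
          mul_lt_mul_of_pos_right hk h3b
        rw [mul_assoc, mul_comm ((3:ℝ)^b), h3b', mul_one] at this
        linarith [this, hkey]
      · rw [hx, Real.rpow_le_rpow_left_iff one_lt_two]
        nlinarith [Nat.cast_nonneg (α := ℝ) k]
      · rw [hx, Real.rpow_le_rpow_left_iff one_lt_two]
        nlinarith [Nat.cast_nonneg (α := ℝ) k]
    · by_contra hcon
      push_neg at hcon
      obtain ⟨k, hk⟩ := shear_aux_unbounded (a - b * l2) (M * (3:ℝ) ^ b) (by linarith)
      have hx : (((k:ℤ) : ℤ) : ℝ) = (k:ℝ) := by push_cast; ring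
      have hkey := key (k:ℤ) l2 ?_ ?_ le_rfl
      · rw [hx] at hkey
        have he : (k:ℝ) * a + (k:ℝ) * l2 * (-b) = (k:ℝ) * (a - b * l2) := by ring
        rw [he] at hkey
        have : M * (3:ℝ) ^ b * (3:ℝ) ^ (-b) < (2:ℝ) ^ ((k:ℝ) * (a - b * l2)) * (3:ℝ) ^ (-b) :=
          mul_lt_mul_of_pos_right hk h3b
        rw [mul_assoc, mul_comm ((3:ℝ)^b), h3b', mul_one] at this
        linarith [this, hkey]
      · rw [hx, Real.rpow_le_rpow_left_iff one_lt_two]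
        nlinarith [Nat.cast_nonneg (α := ℝ) k]
      · rw [hx, Real.rpow_le_rpow_left_iff one_lt_two]
        nlinarith [Nat.cast_nonneg (α := ℝ) k]
  · rintro ⟨ha1, ha2⟩
    refine ⟨1, fun n m₁ m₂ => ?_⟩
    set x : ℝ := (n : ℝ) with hxdef
    have hS1 : (0:ℝ) < (2:ℝ) ^ (x * l1) := Real.rpow_pos_of_pos (by norm_num) _
    have hS2 : (0:ℝ) < (2:ℝ) ^ (x * l2) := Real.rpow_pos_of_pos (by norm_num) _
    have hSn : (0:ℝ) < (2:ℝ) ^ x := Real.rpow_pos_of_pos (by norm_num) _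
    have hm1 : (0:ℝ) ≤ |(m₁:ℝ)| := abs_nonneg _
    have hm2 : (0:ℝ) ≤ |(m₂:ℝ)| := abs_nonneg _
    set S : ℝ := (2:ℝ) ^ x + (2:ℝ) ^ (x * l1) + (2:ℝ) ^ (x * l2)
      + (2:ℝ) ^ (x * l1) * |(m₁:ℝ)| + (2:ℝ) ^ (x * l2) * |(m₂:ℝ)| with hSdef
    have hψ : shearPsi l1 l2 a b n m₁ m₂ = (2:ℝ) ^ (x * a) * S ^ (-b) := rfl
    have main : ∀ c : ℝ, (2:ℝ) ^ (x * c) ≤ S → x * a + x * c * (-b) ≤ 0 →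
        shearPsi l1 l2 a b n m₁ m₂ ≤ 1 := by
      intro c hcS hexp
      have hcpos : (0:ℝ) < (2:ℝ) ^ (x * c) := Real.rpow_pos_of_pos (by norm_num) _
      have hinv : S ^ (-b) ≤ ((2:ℝ) ^ (x * c)) ^ (-b) :=
        Real.rpow_le_rpow_of_nonpos hcpos hcS (neg_nonpos.mpr hb)
      have h2a : (0:ℝ) < (2:ℝ) ^ (x * a) := Real.rpow_pos_of_pos (by norm_num) _
      calc shearPsi l1 l2 a b n m₁ m₂ = (2:ℝ) ^ (x * a) * S ^ (-b) := hψ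
        _ ≤ (2:ℝ) ^ (x * a) * ((2:ℝ) ^ (x * c)) ^ (-b) :=
            mul_le_mul_of_nonneg_left hinv h2a.le
        _ = (2:ℝ) ^ (x * a + x * c * (-b)) := by
            rw [← Real.rpow_mul (by norm_num), ← Real.rpow_add (by norm_num)]
        _ ≤ 1 := Real.rpow_le_one_of_one_le_of_nonpos one_le_two hexp
    rcases le_total 0 x with hx0 | hx0
    · refine main l2 ?_ (by nlinarith)
      have : (0:ℝ) ≤ (2:ℝ) ^ (x * l1) * |(m₁:ℝ)| := by positivity
      have : (0:ℝ) ≤ (2:ℝ) ^ (x * l2) * |(m₂:ℝ)| := by positivity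
      rw [hSdef]; nlinarith
    · refine main l1 ?_ (by nlinarith)
      have : (0:ℝ) ≤ (2:ℝ) ^ (x * l1) * |(m₁:ℝ)| := by positivity
      have : (0:ℝ) ≤ (2:ℝ) ^ (x * l2) * |(m₂:ℝ)| := by positivity
      rw [hSdef]; nlinarith
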